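/- Let η > 0, r ≥ η and p ∈ ℕ₀. There exists a constant C = C(p, η, r) > 0 such that for every real symmetric 6×6 matrix A₀ with xᵀA₀x ≥ η|x|² for all x ∈ ℝ⁶ and operator norm at most r, and for every v ∈ ℝ⁶, there exists w ∈ ℝ⁶ with A₃^co (−A₀⁻¹ A₃^co)^p w = A₃^co v and |w| ≤ C |v|. In particular, the range of A₃^co(−A₀⁻¹A₃^co)^p contains the range of A₃^co. -/

import Mathlib

open Matrix

noncomputable section

/-- The matrix `J₃`. -/
def J3 : Matrix (Fin 3) (Fin 3) ℝ := !![0,-1,0; 1,0,0; 0,0,0]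

/-- The block matrix `A₃^co = [[0, −J₃],[J₃, 0]]`. -/
def A3co : Matrix (Fin 6) (Fin 6) ℝ :=
  Matrix.reindex finSumFinEquiv finSumFinEquiv
    (Matrix.fromBlocks 0 (-J3) J3 0)

/-- The Euclidean norm on `ℝⁿ`. -/
def euclidNorm {n : ℕ} (v : Fin n → ℝ) : ℝ := Real.sqrt (∑ i, v i ^ 2)

/- ### Auxiliary lemmas -/


@[simp] lemma v6_0 {α : Type*} (a b c d e f : α) : ![a,b,c,d,e,f] 0 = a := rfl
@[simp] lemma v6_1 {α : Type*} (a b c d e f : α) : ![a,b,c,d,e,f] 1 = b := rfl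
@[simp] lemma v6_2 {α : Type*} (a b c d e f : α) : ![a,b,c,d,e,f] 2 = c := rfl
@[simp] lemma v6_3 {α : Type*} (a b c d e f : α) : ![a,b,c,d,e,f] 3 = d := rfl
@[simp] lemma v6_4 {α : Type*} (a b c d e f : α) : ![a,b,c,d,e,f] 4 = e := rfl
@[simp] lemma v6_5 {α : Type*} (a b c d e f : α) : ![a,b,c,d,e,f] 5 = f := rfl

lemma enorm_nonneg' {n : ℕ} (v : Fin n → ℝ) : 0 ≤ euclidNorm v := Real.sqrt_nonneg _

lemma enorm_sq' {n : ℕ} (v : Fin n → ℝ) : euclidNorm v ^ 2 = ∑ i, v i ^ 2 :=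
  Real.sq_sqrt (by positivity)

lemma dot_le_enorm {n : ℕ} (x y : Fin n → ℝ) : x ⬝ᵥ y ≤ euclidNorm x * euclidNorm y := by
  simpa [euclidNorm, dotProduct] using Real.sum_mul_le_sqrt_mul_sqrt Finset.univ x y

lemma A3co_eq : A3co = !![0,0,0,0,1,0; 0,0,0,-1,0,0; 0,0,0,0,0,0;
    0,-1,0,0,0,0; 1,0,0,0,0,0; 0,0,0,0,0,0] := by
  ext i j
  fin_cases i <;> fin_cases j <;>
    norm_num [A3co, J3, Matrix.fromBlocks, finSumFinEquiv, Fin.addCases,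
      Matrix.vecHead, Matrix.vecTail, Fin.castLT, Fin.subNat]

lemma A3co_symm : A3coᵀ = A3co := by
  rw [A3co_eq]; ext i j; fin_cases i <;> fin_cases j <;> rfl

set_option maxHeartbeats 2000000 in
lemma A3co_cube : A3co * A3co * A3co = A3co := by
  rw [A3co_eq]; ext i j; fin_cases i <;> fin_cases j <;>
    simp only [Matrix.mul_apply, Fin.sum_univ_six, Matrix.of_apply,
      v6_0, v6_1, v6_2, v6_3, v6_4, v6_5] <;> norm_num

lemma A3co_contract_sq (x : Fin 6 → ℝ) :
    ∑ i, (A3co.mulVec x) i ^ 2 ≤ ∑ i, x i ^ 2 := by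
  rw [A3co_eq]
  simp only [Matrix.mulVec, dotProduct, Fin.sum_univ_six, Matrix.of_apply,
    v6_0, v6_1, v6_2, v6_3, v6_4, v6_5]
  nlinarith [sq_nonneg (x 2), sq_nonneg (x 5)]

lemma A3co_contract (x : Fin 6 → ℝ) : euclidNorm (A3co.mulVec x) ≤ euclidNorm x :=
  Real.sqrt_le_sqrt (A3co_contract_sq x)

lemma dot_symm_swap {B : Matrix (Fin 6) (Fin 6) ℝ} (hB : Bᵀ = B) (u w : Fin 6 → ℝ) :
    u ⬝ᵥ B.mulVec w = (B.mulVec u) ⬝ᵥ w := by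
  rw [Matrix.dotProduct_mulVec, ← Matrix.mulVec_transpose, hB]

/-- there is a constant `C = C(p,η,r) > 0` such that for every
symmetric `η`-positive definite `A₀` with Euclidean operator norm at most `r`
and every `v ∈ ℝ⁶` there is `w ∈ ℝ⁶` with
`A₃^co(−A₀⁻¹A₃^co)^p w = A₃^co v` and `|w| ≤ C|v|`; in particular the range of
`A₃^co(−A₀⁻¹A₃^co)^p` contains the range of `A₃^co`. -/
theorem inverse_on_range_of_A3co (η r : ℝ) (p : ℕ) (hη : 0 < η) (hr : η ≤ r) :
    ∃ C : ℝ, 0 < C ∧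
      ∀ A0 : Matrix (Fin 6) (Fin 6) ℝ, A0.IsSymm →
        (∀ x : Fin 6 → ℝ, η * ∑ i, x i ^ 2 ≤ x ⬝ᵥ A0.mulVec x) →
        (∀ x : Fin 6 → ℝ, euclidNorm (A0.mulVec x) ≤ r * euclidNorm x) →
        ∀ v : Fin 6 → ℝ, ∃ w : Fin 6 → ℝ,
          (A3co * (-(A0⁻¹) * A3co) ^ p).mulVec w = A3co.mulVec v ∧
          euclidNorm w ≤ C * euclidNorm v := by
  have hr0 : 0 < r := lt_of_lt_of_le hη hr
  set m : ℝ := max r 1 with hm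
  have hm1 : (1 : ℝ) ≤ m := le_max_right _ _
  have hmr : r ≤ m := le_max_left _ _
  have hm0 : (0 : ℝ) < m := lt_of_lt_of_le one_pos hm1
  refine ⟨m ^ p, pow_pos hm0 p, ?_⟩
  intro A0 hsym hpos hnorm v
  -- positivity of sums of squares
  have hsq : ∀ x : Fin 6 → ℝ, x ≠ 0 → 0 < ∑ i, x i ^ 2 := by
    intro x hx
    obtain ⟨i, hi⟩ := Function.ne_iff.mp hx
    exact Finset.sum_pos' (fun j _ => sq_nonneg _)
      ⟨i, Finset.mem_univ i, pow_pos (abs_pos.mpr hi) 2 |>.trans_le (by rw [← abs_pow, abs_pow]; exact le_of_eq (sq_abs _))⟩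
  -- A0 is positive definite
  have hherm : A0.IsHermitian := by
    ext i j
    simpa [Matrix.conjTranspose_apply] using congrFun (congrFun hsym i) j
  have hpd : A0.PosDef := by
    refine Matrix.posDef_iff_dotProduct_mulVec.mpr ⟨hherm, fun x hx => ?_⟩
    rw [show star x = x from funext fun i => star_trivial _]
    exact lt_of_lt_of_le (mul_pos hη (hsq x hx)) (hpos x)
  have hdet : IsUnit A0.det := (Matrix.isUnit_iff_isUnit_det A0).mp hpd.isUnit
  have hAinv : A0 * A0⁻¹ = 1 := Matrix.mul_nonsing_inv _ hdet
  have hAinvsymm : A0⁻¹ᵀ = A0⁻¹ := by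
    rw [Matrix.transpose_nonsing_inv, hsym]
  -- lower bound for the inverse quadratic form
  have hlow : ∀ x : Fin 6 → ℝ, ∑ i, x i ^ 2 ≤ r * (x ⬝ᵥ A0⁻¹.mulVec x) := by
    intro x
    set y := A0⁻¹.mulVec x with hy
    have hxy : A0.mulVec y = x := by
      rw [hy, Matrix.mulVec_mulVec, hAinv, Matrix.one_mulVec]
    have hdotx : x ⬝ᵥ x = ∑ i, x i ^ 2 := by
      simp [dotProduct, sq]
    have hkey : ∀ l : ℝ, 0 ≤ (x ⬝ᵥ A0.mulVec x) * (l * l) + (2 * (x ⬝ᵥ x)) * l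
        + (y ⬝ᵥ A0.mulVec y) := by
      intro l
      have h := hpos (y + l • x)
      have h0 : (0 : ℝ) ≤ η * ∑ i, (y + l • x) i ^ 2 := by positivity
      have hexp : (y + l • x) ⬝ᵥ A0.mulVec (y + l • x)
          = (x ⬝ᵥ A0.mulVec x) * (l * l) + (2 * (x ⬝ᵥ x)) * l + (y ⬝ᵥ A0.mulVec y) := by
        have e1 : y ⬝ᵥ A0.mulVec x = x ⬝ᵥ x := by
          rw [dot_symm_swap hsym, hxy]
        have e2 : x ⬝ᵥ A0.mulVec y = x ⬝ᵥ x := by rw [hxy]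
        rw [Matrix.mulVec_add, Matrix.mulVec_smul]
        rw [dotProduct_add, add_dotProduct, add_dotProduct]
        rw [dotProduct_smul, smul_dotProduct, smul_dotProduct, dotProduct_smul]
        simp only [smul_eq_mul, e1, e2]
        ring
      rw [hexp] at h
      linarith
    have hdisc := discrim_le_zero hkey
    rw [discrim] at hdisc
    -- hdisc : (2*(x⬝x))^2 - 4*(x⬝A0x)*(y⬝A0y) ≤ 0
    have hcs : x ⬝ᵥ A0.mulVec x ≤ r * (x ⬝ᵥ x) := by
      have h1 := dot_le_enorm x (A0.mulVec x)
      have h2 := hnorm x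
      have h3 : euclidNorm x * euclidNorm (A0.mulVec x) ≤ euclidNorm x * (r * euclidNorm x) :=
        mul_le_mul_of_nonneg_left h2 (enorm_nonneg' x)
      have h4 : euclidNorm x * (r * euclidNorm x) = r * (x ⬝ᵥ x) := by
        rw [hdotx, ← enorm_sq' x]; ring
      linarith
    have ha0 : (0 : ℝ) ≤ y ⬝ᵥ A0.mulVec y :=
      le_trans (by positivity) (hpos y)
    have ht0 : (0 : ℝ) ≤ x ⬝ᵥ x := by rw [hdotx]; positivity
    have hfin : x ⬝ᵥ x ≤ r * (y ⬝ᵥ A0.mulVec y) := by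
      have h5 : (x ⬝ᵥ x) * (x ⬝ᵥ x) ≤ (r * (y ⬝ᵥ A0.mulVec y)) * (x ⬝ᵥ x) := by
        nlinarith [mul_le_mul_of_nonneg_right hcs ha0]
      rcases eq_or_lt_of_le ht0 with h6 | h6
      · rw [← h6]; exact mul_nonneg hr0.le ha0
      · exact le_of_mul_le_mul_right h5 h6
    have hxa : x ⬝ᵥ A0⁻¹.mulVec x = y ⬝ᵥ A0.mulVec y := by
      rw [← hy, hxy, dotProduct_comm]
    rw [hxa, ← hdotx]
    exact hfin
  -- the auxiliary matrices
  set P : Matrix (Fin 6) (Fin 6) ℝ := A3co * A3co with hP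
  set S : Matrix (Fin 6) (Fin 6) ℝ := A3co * A0⁻¹ * A3co with hS
  set S' : Matrix (Fin 6) (Fin 6) ℝ := S + 1 - P with hS'
  have hS't : S'ᵀ = S' := by
    rw [hS', hS, hP]
    simp only [Matrix.transpose_sub, Matrix.transpose_add, Matrix.transpose_mul,
      Matrix.transpose_one, A3co_symm, hAinvsymm, mul_assoc]
  -- quadratic form of S'
  have hform : ∀ y : Fin 6 → ℝ, y ⬝ᵥ S'.mulVec y
      = (A3co.mulVec y) ⬝ᵥ A0⁻¹.mulVec (A3co.mulVec y) + (∑ i, y i ^ 2)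
        - ∑ i, (A3co.mulVec y) i ^ 2 := by
    intro y
    have h1 : S'.mulVec y = S.mulVec y + y - P.mulVec y := by
      rw [hS', Matrix.sub_mulVec, Matrix.add_mulVec, Matrix.one_mulVec]
    have h2 : y ⬝ᵥ S.mulVec y = (A3co.mulVec y) ⬝ᵥ A0⁻¹.mulVec (A3co.mulVec y) := by
      rw [hS, ← Matrix.mulVec_mulVec, ← Matrix.mulVec_mulVec,
        dot_symm_swap A3co_symm]
    have h3 : y ⬝ᵥ P.mulVec y = ∑ i, (A3co.mulVec y) i ^ 2 := by
      rw [hP, ← Matrix.mulVec_mulVec, dot_symm_swap A3co_symm]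
      simp [dotProduct, sq]
    have h4 : y ⬝ᵥ y = ∑ i, y i ^ 2 := by simp [dotProduct, sq]
    rw [h1, dotProduct_sub, dotProduct_add, h2, h3, h4]
  have hq : ∀ y : Fin 6 → ℝ, ∑ i, y i ^ 2 ≤ m * (y ⬝ᵥ S'.mulVec y) := by
    intro y
    set z := A3co.mulVec y with hz
    have h1 : ∑ i, z i ^ 2 ≤ r * (z ⬝ᵥ A0⁻¹.mulVec z) := hlow z
    have h2 : ∑ i, z i ^ 2 ≤ ∑ i, y i ^ 2 := A3co_contract_sq y
    have hz0 : (0 : ℝ) ≤ ∑ i, z i ^ 2 := Finset.sum_nonneg fun i _ => sq_nonneg _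
    have h3 : (0 : ℝ) ≤ z ⬝ᵥ A0⁻¹.mulVec z := by nlinarith
    rw [hform y]
    nlinarith [mul_nonneg (sub_nonneg.mpr hmr) h3,
      mul_nonneg (sub_nonneg.mpr hm1) (sub_nonneg.mpr h2)]
  -- S' is positive definite, hence invertible
  have hS'pd : S'.PosDef := by
    refine Matrix.posDef_iff_dotProduct_mulVec.mpr ⟨?_, fun y hy => ?_⟩
    · ext i j
      simpa [Matrix.conjTranspose_apply] using congrFun (congrFun hS't i) j
    · have h1 := hq y
      have h2 := hsq y hy
      simp only [star_trivial]
      nlinarith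
  have hS'det : IsUnit S'.det := (Matrix.isUnit_iff_isUnit_det S').mp hS'pd.isUnit
  have hS'inv : S' * S'⁻¹ = 1 := Matrix.mul_nonsing_inv _ hS'det
  -- norm bound for S'⁻¹
  have hS'bound : ∀ x : Fin 6 → ℝ, euclidNorm (S'⁻¹.mulVec x) ≤ m * euclidNorm x := by
    intro x
    set y := S'⁻¹.mulVec x with hy
    have h2 : S'.mulVec y = x := by
      rw [hy, Matrix.mulVec_mulVec, hS'inv, Matrix.one_mulVec]
    have h1 : euclidNorm y ^ 2 ≤ m * (y ⬝ᵥ x) := by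
      rw [enorm_sq']; rw [← h2]; exact hq y
    have h3 : y ⬝ᵥ x ≤ euclidNorm y * euclidNorm x := dot_le_enorm y x
    have h4 : euclidNorm y ^ 2 ≤ m * (euclidNorm y * euclidNorm x) :=
      le_trans h1 (mul_le_mul_of_nonneg_left h3 (le_of_lt hm0))
    rcases eq_or_lt_of_le (enorm_nonneg' y) with h0 | h0
    · rw [← h0]; exact mul_nonneg hm0.le (enorm_nonneg' x)
    · nlinarith [enorm_nonneg' x]
  -- algebraic identities
  have hPS : P * S = S := by
    rw [hP, hS, show A3co * A3co * (A3co * A0⁻¹ * A3co)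
      = (A3co * A3co * A3co) * A0⁻¹ * A3co by noncomm_ring, A3co_cube]
  have hPP : P * P = P := by
    rw [hP, show A3co * A3co * (A3co * A3co) = (A3co * A3co * A3co) * A3co by noncomm_ring,
      A3co_cube]
  have hPA : P * A3co = A3co := by rw [hP, A3co_cube]
  have hPS' : P * S' = S := by
    rw [hS', mul_sub, mul_add, mul_one, hPS, hPP]
    abel
  have hSS' : S * S'⁻¹ = P := by
    rw [← hPS', mul_assoc, hS'inv, mul_one]
  have key2 : ∀ q : ℕ, P * ((A3co * S'⁻¹) ^ q * A3co) = (A3co * S'⁻¹) ^ q * A3co := by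
    intro q
    cases q with
    | zero => simpa using hPA
    | succ n =>
      rw [pow_succ']
      rw [show A3co * S'⁻¹ * (A3co * S'⁻¹) ^ n * A3co
        = A3co * (S'⁻¹ * ((A3co * S'⁻¹) ^ n * A3co)) by noncomm_ring]
      rw [← mul_assoc, hPA]
  have hID : ∀ q : ℕ, (A3co * A0⁻¹) ^ q * ((A3co * S'⁻¹) ^ q * A3co) = A3co := by
    intro q
    induction q with
    | zero => simp
    | succ n ih =>
      rw [pow_succ, pow_succ']
      calc (A3co * A0⁻¹) ^ n * (A3co * A0⁻¹)
            * (A3co * S'⁻¹ * (A3co * S'⁻¹) ^ n * A3co)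
          = (A3co * A0⁻¹) ^ n
            * ((A3co * A0⁻¹ * A3co * S'⁻¹) * ((A3co * S'⁻¹) ^ n * A3co)) := by noncomm_ring
        _ = (A3co * A0⁻¹) ^ n * (P * ((A3co * S'⁻¹) ^ n * A3co)) := by
            rw [show A3co * A0⁻¹ * A3co * S'⁻¹ = S * S'⁻¹ by rw [hS], hSS']
        _ = (A3co * A0⁻¹) ^ n * ((A3co * S'⁻¹) ^ n * A3co) := by rw [key2 n]
        _ = A3co := ih
  have hsemi : A3co * (A0⁻¹ * A3co) ^ p = (A3co * A0⁻¹) ^ p * A3co := by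
    have h : SemiconjBy A3co (A0⁻¹ * A3co) (A3co * A0⁻¹) := by
      unfold SemiconjBy; noncomm_ring
    exact (h.pow_right p).eq
  set W : Matrix (Fin 6) (Fin 6) ℝ := A3co * ((A3co * S'⁻¹) ^ p * A3co) with hW
  have hKEY : A3co * (-(A0⁻¹) * A3co) ^ p * W = ((-1 : ℝ) ^ p) • A3co := by
    have h1 : (-(A0⁻¹) * A3co : Matrix (Fin 6) (Fin 6) ℝ)
        = (-1 : ℝ) • (A0⁻¹ * A3co) := by
      rw [neg_mul, ← neg_one_smul ℝ (A0⁻¹ * A3co)]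
    rw [h1, smul_pow, mul_smul_comm, smul_mul_assoc]
    congr 1
    calc A3co * (A0⁻¹ * A3co) ^ p * W
        = (A3co * A0⁻¹) ^ p * A3co * W := by rw [hsemi]
      _ = (A3co * A0⁻¹) ^ p * (P * ((A3co * S'⁻¹) ^ p * A3co)) := by
          rw [hW, hP]; noncomm_ring
      _ = (A3co * A0⁻¹) ^ p * ((A3co * S'⁻¹) ^ p * A3co) := by rw [key2 p]
      _ = A3co := hID p
  -- the witness
  refine ⟨((-1 : ℝ) ^ p) • (W.mulVec v), ?_, ?_⟩
  · rw [Matrix.mulVec_smul, Matrix.mulVec_mulVec, hKEY, Matrix.smul_mulVec,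
      smul_smul]
    have : ((-1 : ℝ) ^ p) * ((-1 : ℝ) ^ p) = 1 := by
      rw [← pow_add, show p + p = 2 * p by ring, pow_mul]; norm_num
    rw [this, one_smul]
  · have hsmul : euclidNorm (((-1 : ℝ) ^ p) • (W.mulVec v)) = euclidNorm (W.mulVec v) := by
      have hc : (((-1 : ℝ) ^ p)) ^ 2 = 1 := by
        rw [← pow_mul, show p * 2 = 2 * p by ring, pow_mul]; norm_num
      simp only [euclidNorm, Pi.smul_apply, smul_eq_mul, mul_pow, hc, one_mul]
    rw [hsmul]
    have hTpow : ∀ (q : ℕ) (x : Fin 6 → ℝ),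
        euclidNorm (((A3co * S'⁻¹) ^ q).mulVec x) ≤ m ^ q * euclidNorm x := by
      intro q
      induction q with
      | zero => intro x; simp [Matrix.one_mulVec]
      | succ n ih =>
        intro x
        rw [pow_succ', ← Matrix.mulVec_mulVec, ← Matrix.mulVec_mulVec]
        calc euclidNorm (A3co.mulVec (S'⁻¹.mulVec (((A3co * S'⁻¹) ^ n).mulVec x)))
            ≤ euclidNorm (S'⁻¹.mulVec (((A3co * S'⁻¹) ^ n).mulVec x)) := A3co_contract _
          _ ≤ m * euclidNorm (((A3co * S'⁻¹) ^ n).mulVec x) := hS'bound _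
          _ ≤ m * (m ^ n * euclidNorm x) :=
              mul_le_mul_of_nonneg_left (ih x) (le_of_lt hm0)
          _ = m ^ (n + 1) * euclidNorm x := by ring
    have h1 : W.mulVec v = A3co.mulVec (((A3co * S'⁻¹) ^ p).mulVec (A3co.mulVec v)) := by
      rw [hW, Matrix.mulVec_mulVec, Matrix.mulVec_mulVec, mul_assoc]
    rw [h1]
    calc euclidNorm (A3co.mulVec (((A3co * S'⁻¹) ^ p).mulVec (A3co.mulVec v)))
        ≤ euclidNorm (((A3co * S'⁻¹) ^ p).mulVec (A3co.mulVec v)) := A3co_contract _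
      _ ≤ m ^ p * euclidNorm (A3co.mulVec v) := hTpow p _
      _ ≤ m ^ p * euclidNorm v :=
          mul_le_mul_of_nonneg_left (A3co_contract v) (le_of_lt (pow_pos hm0 p))
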